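/- If L is a finite distributive lattice with an odd number of elements the greatest element 1, then L \ {1} can be partitioned into two-element chains. -/

import Mathlib

namespace SandsAux

open Finset OrderDual

set_option linter.unusedSectionVars false

section Defs

variable {α : Type*} [DistribLattice α] [Fintype α] [DecidableEq α]

/-- The interval `[a,b]` as a `Finset`. -/
noncomputable def icc (a b : α) : Finset α :=
  @Finset.filter _ (fun x => a ≤ x ∧ x ≤ b) (Classical.decPred _) Finset.univ

/-- `{x ∈ [a,b] | ¬ u ≤ x}` where `u : WithTop α` (so `u = ⊤` gives all of `[a,b]`). -/
noncomputable def ds (a b : α) (u : WithTop α) : Finset α :=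
  @Finset.filter _ (fun x => a ≤ x ∧ x ≤ b ∧ ¬ u ≤ (x : WithTop α)) (Classical.decPred _)
    Finset.univ

@[simp] lemma mem_icc {a b x : α} : x ∈ icc a b ↔ a ≤ x ∧ x ≤ b := by
  simp [icc, Finset.mem_filter]

@[simp] lemma mem_ds {a b x : α} {u : WithTop α} :
    x ∈ ds a b u ↔ a ≤ x ∧ x ≤ b ∧ ¬ u ≤ (x : WithTop α) := by
  simp [ds, Finset.mem_filter]

lemma ds_top (a b : α) : ds a b ⊤ = icc a b := by
  ext x; simp

lemma ds_coe_top {a b : α} : ds a b (↑b) = (icc a b).erase b := by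
  ext x
  simp only [mem_ds, Finset.mem_erase, mem_icc, WithTop.coe_le_coe]
  constructor
  · rintro ⟨h1, h2, h3⟩
    exact ⟨fun he => h3 (he ▸ le_rfl), h1, h2⟩
  · rintro ⟨h1, h2, h3⟩
    exact ⟨h2, h3, fun hbx => h1 (le_antisymm h3 hbx)⟩

/-- A partition of `S` into two-element chains `p.1 < p.2`. -/
def Chains (C : Finset (α × α)) (S : Finset α) : Prop :=
  (∀ p ∈ C, p.1 < p.2 ∧ p.1 ∈ S ∧ p.2 ∈ S) ∧
    ∀ x ∈ S, ∃! p, p ∈ C ∧ (x = p.1 ∨ x = p.2)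

def Matchable (S : Finset α) : Prop := ∃ C, Chains C S

lemma matchable_empty : Matchable (∅ : Finset α) := by
  refine ⟨∅, ?_, ?_⟩ <;> simp

lemma matchable_congr {S T : Finset α} (h : S = T) (hS : Matchable S) : Matchable T := h ▸ hS

lemma matchable_pair {x y : α} (h : x < y) : Matchable ({x, y} : Finset α) := by
  refine ⟨{(x, y)}, ?_, ?_⟩
  · intro p hp; simp only [Finset.mem_singleton] at hp; subst hp
    exact ⟨h, by simp, by simp⟩
  · intro z hz
    refine ⟨(x, y), ⟨by simp, ?_⟩, ?_⟩
    · simp only [Finset.mem_insert, Finset.mem_singleton] at hz; tauto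
    · intro q hq; simp only [Finset.mem_singleton] at hq; exact hq.1

lemma chains_union {S T : Finset α} {C D : Finset (α × α)} (hd : Disjoint S T)
    (hS : Chains C S) (hT : Chains D T) : Chains (C ∪ D) (S ∪ T) := by
  constructor
  · intro p hp
    rcases Finset.mem_union.1 hp with h | h
    · obtain ⟨h1, h2, h3⟩ := hS.1 p h
      exact ⟨h1, Finset.mem_union_left _ h2, Finset.mem_union_left _ h3⟩
    · obtain ⟨h1, h2, h3⟩ := hT.1 p h
      exact ⟨h1, Finset.mem_union_right _ h2, Finset.mem_union_right _ h3⟩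
  · intro x hx
    have key : ∀ p ∈ C ∪ D, (x = p.1 ∨ x = p.2) → (x ∈ S ↔ p ∈ C) := by
      intro p hp hxp
      rcases Finset.mem_union.1 hp with h | h
      · obtain ⟨_, h2, h3⟩ := hS.1 p h
        exact ⟨fun _ => h, fun _ => by rcases hxp with rfl | rfl <;> assumption⟩
      · obtain ⟨_, h2, h3⟩ := hT.1 p h
        have hxT : x ∈ T := by rcases hxp with rfl | rfl <;> assumption
        constructor
        · intro hxS; exact absurd (hd.forall_ne_finset hxS hxT rfl) (by simp)
        · intro hpC
          obtain ⟨_, h2', h3'⟩ := hS.1 p hpC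
          rcases hxp with rfl | rfl <;> assumption
    rcases Finset.mem_union.1 hx with h | h
    · obtain ⟨p, ⟨hp1, hp2⟩, hp3⟩ := hS.2 x h
      refine ⟨p, ⟨Finset.mem_union_left _ hp1, hp2⟩, ?_⟩
      intro q ⟨hq1, hq2⟩
      exact hp3 q ⟨(key q hq1 hq2).1 h, hq2⟩
    · obtain ⟨p, ⟨hp1, hp2⟩, hp3⟩ := hT.2 x h
      refine ⟨p, ⟨Finset.mem_union_right _ hp1, hp2⟩, ?_⟩
      intro q ⟨hq1, hq2⟩
      have hqD : q ∈ D := by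
        rcases Finset.mem_union.1 hq1 with hC | hD
        · exfalso
          obtain ⟨_, h2, h3⟩ := hS.1 q hC
          have hxS : x ∈ S := by rcases hq2 with rfl | rfl <;> assumption
          exact absurd (hd.forall_ne_finset hxS h rfl) (by simp)
        · exact hD
      exact hp3 q ⟨hqD, hq2⟩

lemma matchable_union {S T : Finset α} (hd : Disjoint S T)
    (hS : Matchable S) (hT : Matchable T) : Matchable (S ∪ T) := by
  obtain ⟨C, hC⟩ := hS; obtain ⟨D, hD⟩ := hT
  exact ⟨C ∪ D, chains_union hd hC hD⟩

lemma chains_exists_pair {S : Finset α} {C : Finset (α × α)} (h : Chains C S) {x : α}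
    (hx : x ∈ S) : ∃ p ∈ C, x = p.1 ∨ x = p.2 := by
  obtain ⟨p, ⟨h1, h2⟩, _⟩ := h.2 x hx
  exact ⟨p, h1, h2⟩

lemma chains_erase {S : Finset α} {C : Finset (α × α)} (h : Chains C S) {p : α × α}
    (hp : p ∈ C) : Chains (C.erase p) ((S.erase p.1).erase p.2) := by
  constructor
  · intro q hq
    have hqC := Finset.mem_of_mem_erase hq
    have hqp : q ≠ p := Finset.ne_of_mem_erase hq
    obtain ⟨h1, h2, h3⟩ := h.1 q hqC
    have key : ∀ y, y ∈ S → (y = q.1 ∨ y = q.2) → y ≠ p.1 ∧ y ≠ p.2 := by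
      intro y hyS hyq
      obtain ⟨r, -, hr⟩ := h.2 y hyS
      constructor
      · rintro rfl
        exact hqp (by rw [hr q ⟨hqC, hyq⟩, hr p ⟨hp, Or.inl rfl⟩])
      · rintro rfl
        exact hqp (by rw [hr q ⟨hqC, hyq⟩, hr p ⟨hp, Or.inr rfl⟩])
    obtain ⟨e1, e2⟩ := key q.1 h2 (Or.inl rfl)
    obtain ⟨e3, e4⟩ := key q.2 h3 (Or.inr rfl)
    exact ⟨h1, by simp [Finset.mem_erase, e1, e2, h2], by simp [Finset.mem_erase, e3, e4, h3]⟩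
  · intro x hx
    simp only [Finset.mem_erase] at hx
    obtain ⟨hx2, hx1, hxS⟩ := hx
    obtain ⟨q, ⟨hq1, hq2⟩, hq3⟩ := h.2 x hxS
    have hqp : q ≠ p := by
      rintro rfl; rcases hq2 with rfl | rfl
      · exact hx1 rfl
      · exact hx2 rfl
    refine ⟨q, ⟨Finset.mem_erase.2 ⟨hqp, hq1⟩, hq2⟩, ?_⟩
    intro r ⟨hr1, hr2⟩
    exact hq3 r ⟨Finset.mem_of_mem_erase hr1, hr2⟩

lemma matchable_dual {S : Finset αᵒᵈ} (h : Matchable S) :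
    Matchable (S.image (ofDual : αᵒᵈ → α)) := by
  classical
  obtain ⟨C, hC1, hC2⟩ := h
  refine ⟨C.image (fun p => (ofDual p.2, ofDual p.1)), ?_, ?_⟩
  · intro p hp
    obtain ⟨q, hq, rfl⟩ := Finset.mem_image.1 hp
    obtain ⟨h1, h2, h3⟩ := hC1 q hq
    exact ⟨h1, Finset.mem_image_of_mem _ h3, Finset.mem_image_of_mem _ h2⟩
  · intro x hx
    obtain ⟨z, hz, rfl⟩ := Finset.mem_image.1 hx
    obtain ⟨p, ⟨hp1, hp2⟩, hp3⟩ := hC2 z hz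
    refine ⟨(ofDual p.2, ofDual p.1), ⟨Finset.mem_image_of_mem _ hp1, ?_⟩, ?_⟩
    · rcases hp2 with rfl | rfl
      · exact Or.inr rfl
      · exact Or.inl rfl
    · rintro q ⟨hq1, hq2⟩
      obtain ⟨r, hr, rfl⟩ := Finset.mem_image.1 hq1
      have hzr : z = r.1 ∨ z = r.2 := by
        rcases hq2 with h | h
        · exact Or.inr (ofDual_inj.1 h)
        · exact Or.inl (ofDual_inj.1 h)
      have : r = p := hp3 r ⟨hr, hzr⟩
      subst this; rfl

lemma ds_dual_eq (a m : α) :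
    ((ds (toDual m) (toDual a) ((toDual a : αᵒᵈ) : WithTop αᵒᵈ)).image (ofDual : αᵒᵈ → α))
      = (icc a m).erase a := by
  classical
  ext x
  constructor
  · intro hx
    obtain ⟨z, hz, rfl⟩ := Finset.mem_image.1 hx
    rw [mem_ds] at hz
    obtain ⟨h1, h2, h3⟩ := hz
    rw [WithTop.coe_le_coe] at h3
    refine Finset.mem_erase.2 ⟨?_, mem_icc.2 ⟨h2, h1⟩⟩
    intro he
    exact h3 (le_of_eq (by rw [← he]; rfl))
  · intro hx
    obtain ⟨hne, hx'⟩ := Finset.mem_erase.1 hx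
    rw [mem_icc] at hx'
    refine Finset.mem_image.2 ⟨toDual x, ?_, rfl⟩
    rw [mem_ds]
    refine ⟨hx'.2, hx'.1, ?_⟩
    rw [WithTop.coe_le_coe]
    intro h
    exact hne (le_antisymm (toDual_le_toDual.1 h) hx'.1)

lemma icc_dual_card (a m : α) :
    (icc (toDual m) (toDual a) : Finset αᵒᵈ).card = (icc a m).card := by
  classical
  rw [show (icc a m : Finset α) = (icc (toDual m) (toDual a) : Finset αᵒᵈ).image ofDual from ?_]
  · rw [Finset.card_image_of_injective _ ofDual.injective]
  · ext x
    constructor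
    · intro hx
      refine Finset.mem_image.2 ⟨toDual x, ?_, rfl⟩
      rw [mem_icc] at hx ⊢
      exact ⟨toDual_le_toDual.2 hx.2, toDual_le_toDual.2 hx.1⟩
    · intro hx
      obtain ⟨z, hz, rfl⟩ := Finset.mem_image.1 hx
      rw [mem_icc] at hz ⊢
      exact ⟨hz.2, hz.1⟩

/-- Coatom decomposition. -/
lemma coatom_struct {a b : α} (hab : a ≤ b) (hne : ∃ x, a ≤ x ∧ x ≤ b ∧ x ≠ b) :
    ∃ c u₀ : α, a ≤ c ∧ c < b ∧ a ≤ u₀ ∧ u₀ ≤ b ∧ ¬ u₀ ≤ c ∧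
      (∀ x, a ≤ x → x ≤ b → (x ≤ c ∨ u₀ ≤ x)) := by
  classical
  obtain ⟨x₀, hx₀a, hx₀b, hx₀⟩ := hne
  have hTne : ((icc a b).erase b).Nonempty :=
    ⟨x₀, Finset.mem_erase.2 ⟨hx₀, mem_icc.2 ⟨hx₀a, hx₀b⟩⟩⟩
  obtain ⟨c, hc⟩ := Finset.exists_maximal hTne
  obtain ⟨hcT, hcmax⟩ : c ∈ ((icc a b).erase b) ∧ ∀ x ∈ ((icc a b).erase b), ¬ c < x :=
    ⟨hc.1, fun x hx hlt => lt_irrefl c (lt_of_lt_of_le hlt (hc.2 hx hlt.le))⟩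
  rw [Finset.mem_erase, mem_icc] at hcT
  obtain ⟨hcb', hac, hcb⟩ := hcT
  have hclt : c < b := lt_of_le_of_ne hcb hcb'
  have hmax : ∀ x, a ≤ x → x ≤ b → c < x → x = b := by
    intro x hax hxb hcx
    by_contra hxbne
    exact hcmax x (Finset.mem_erase.2 ⟨hxbne, mem_icc.2 ⟨hax, hxb⟩⟩) hcx
  set U : Finset α :=
    @Finset.filter _ (fun x => a ≤ x ∧ x ≤ b ∧ ¬ x ≤ c) (Classical.decPred _) Finset.univ with hU
  have memU : ∀ x, x ∈ U ↔ a ≤ x ∧ x ≤ b ∧ ¬ x ≤ c := by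
    intro x; simp [hU, Finset.mem_filter]
  have hbU : b ∈ U := (memU b).2 ⟨hab, le_rfl, fun h => hcb' (le_antisymm hcb h)⟩
  have hUclosed : ∀ x ∈ (U : Set α), ∀ y ∈ (U : Set α), x ⊓ y ∈ (U : Set α) := by
    intro x hx y hy
    simp only [Finset.coe_filter, Set.mem_setOf_eq, Finset.mem_univ, true_and, hU] at hx hy ⊢
    obtain ⟨hax, hxb, hxc⟩ := hx
    obtain ⟨hay, hyb, hyc⟩ := hy
    refine ⟨le_inf hax hay, le_trans inf_le_left hxb, ?_⟩
    intro hinfc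
    have h1 : c ⊔ x = b := by
      refine hmax _ (le_trans hac le_sup_left) (sup_le hcb hxb) ?_
      exact lt_of_le_of_ne le_sup_left (fun h => hxc (le_trans le_sup_right h.ge))
    have h2 : c ⊔ y = b := by
      refine hmax _ (le_trans hac le_sup_left) (sup_le hcb hyb) ?_
      exact lt_of_le_of_ne le_sup_left (fun h => hyc (le_trans le_sup_right h.ge))
    have h3 : c ⊔ (x ⊓ y) = b := by rw [sup_inf_left, h1, h2, inf_idem]
    rw [sup_eq_left.2 hinfc] at h3
    exact hcb' h3
  have hUne : U.Nonempty := ⟨b, hbU⟩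
  have hu₀U : U.inf' hUne id ∈ U := by
    have := Finset.inf'_mem (U : Set α) hUclosed U hUne id (fun i hi => by simpa using hi)
    simpa using this
  set u₀ := U.inf' hUne id with hu₀
  rw [memU] at hu₀U
  refine ⟨c, u₀, hac, hclt, hu₀U.1, hu₀U.2.1, hu₀U.2.2, ?_⟩
  intro x hax hxb
  by_cases hxc : x ≤ c
  · exact Or.inl hxc
  · exact Or.inr (Finset.inf'_le id ((memU x).2 ⟨hax, hxb, hxc⟩))

/-- Atom decomposition. -/
lemma atom_struct {a b u₁ : α} (hau : a < u₁) (hub : u₁ ≤ b) :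
    ∃ s m : α, a < s ∧ s ≤ u₁ ∧ a ≤ m ∧ m ≤ b ∧ ¬ s ≤ m ∧
      (∀ x, a ≤ x → x ≤ b → ¬ s ≤ x → x ≤ m) := by
  classical
  have hab : a ≤ b := le_trans hau.le hub
  have hTne : ((icc a u₁).erase a).Nonempty :=
    ⟨u₁, Finset.mem_erase.2 ⟨hau.ne', mem_icc.2 ⟨hau.le, le_rfl⟩⟩⟩
  obtain ⟨s, hs⟩ := Finset.exists_minimal hTne
  obtain ⟨hsT, hsmin⟩ : s ∈ ((icc a u₁).erase a) ∧ ∀ x ∈ ((icc a u₁).erase a), ¬ x < s :=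
    ⟨hs.1, fun x hx hlt => lt_irrefl x (lt_of_lt_of_le hlt (hs.2 hx hlt.le))⟩
  rw [Finset.mem_erase, mem_icc] at hsT
  obtain ⟨hsa', has, hsu⟩ := hsT
  have hlt : a < s := lt_of_le_of_ne has (Ne.symm hsa')
  have hprime : ∀ x y, a ≤ x → a ≤ y → s ≤ x ⊔ y → s ≤ x ∨ s ≤ y := by
    intro x y hax hay hsxy
    by_contra hcon
    push_neg at hcon
    obtain ⟨h1, h2⟩ := hcon
    have key : ∀ z, a ≤ z → ¬ s ≤ z → s ⊓ z = a := by
      intro z haz hsz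
      by_contra hne
      refine hsmin (s ⊓ z) (Finset.mem_erase.2 ⟨hne, mem_icc.2
        ⟨le_inf hlt.le haz, le_trans inf_le_left hsu⟩⟩) ?_
      exact lt_of_le_of_ne inf_le_left (fun h => hsz (h ▸ inf_le_right))
    have : s = a := by
      have hs1 : s = s ⊓ (x ⊔ y) := (inf_eq_left.2 hsxy).symm
      rw [inf_sup_left, key x hax h1, key y hay h2, sup_idem] at hs1
      exact hs1
    exact hlt.ne' this
  set I : Finset α :=
    @Finset.filter _ (fun x => a ≤ x ∧ x ≤ b ∧ ¬ s ≤ x) (Classical.decPred _) Finset.univ with hI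
  have memI : ∀ x, x ∈ I ↔ a ≤ x ∧ x ≤ b ∧ ¬ s ≤ x := by
    intro x; simp [hI, Finset.mem_filter]
  have haI : a ∈ I := (memI a).2 ⟨le_rfl, hab, fun h => hsa' (le_antisymm h has)⟩
  have hIclosed : ∀ x ∈ (I : Set α), ∀ y ∈ (I : Set α), x ⊔ y ∈ (I : Set α) := by
    intro x hx y hy
    simp only [Finset.coe_filter, Set.mem_setOf_eq, Finset.mem_univ, true_and, hI] at hx hy ⊢
    obtain ⟨hax, hxb, hxs⟩ := hx
    obtain ⟨hay, hyb, hys⟩ := hy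
    refine ⟨le_trans hax le_sup_left, sup_le hxb hyb, ?_⟩
    intro hsxy
    rcases hprime x y hax hay hsxy with h | h
    · exact hxs h
    · exact hys h
  have hIne : I.Nonempty := ⟨a, haI⟩
  have hmI : I.sup' hIne id ∈ I := by
    have := Finset.sup'_mem (I : Set α) hIclosed I hIne id (fun i hi => by simpa using hi)
    simpa using this
  set m := I.sup' hIne id with hm
  rw [memI] at hmI
  refine ⟨s, m, hlt, hsu, hmI.1, hmI.2.1, hmI.2.2, ?_⟩
  intro x hax hxb hsx
  exact Finset.le_sup' id ((memI x).2 ⟨hax, hxb, hsx⟩)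

/-- Splitting a `ds`-set at an atom `s` below the defining element. -/
lemma ds_split {a b s m u₁ : α} (has : a < s) (hsu : s ≤ u₁)
    (hmb : m ≤ b) (hsm : ¬ s ≤ m)
    (hI : ∀ x, a ≤ x → x ≤ b → ¬ s ≤ x → x ≤ m) :
    ds a b (↑u₁) = icc a m ∪ ds s b (↑u₁) ∧ Disjoint (icc a m) (ds s b (↑u₁)) := by
  constructor
  · ext x
    simp only [mem_ds, Finset.mem_union, mem_icc, WithTop.coe_le_coe]
    constructor
    · rintro ⟨h1, h2, h3⟩
      by_cases hsx : s ≤ x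
      · exact Or.inr ⟨hsx, h2, h3⟩
      · exact Or.inl ⟨h1, hI x h1 h2 hsx⟩
    · rintro (⟨h1, h2⟩ | ⟨h1, h2, h3⟩)
      · exact ⟨h1, le_trans h2 hmb, fun hux => hsm (le_trans (le_trans hsu hux) h2)⟩
      · exact ⟨le_trans has.le h1, h2, h3⟩
  · rw [Finset.disjoint_left]
    intro x hx hx'
    rw [mem_icc] at hx
    rw [mem_ds] at hx'
    exact hsm (le_trans hx'.1 hx.2)

lemma icc_card_lt {a b a' b' : α} (hsub : icc a' b' ⊆ icc a b) {w : α}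
    (hw : w ∈ icc a b) (hw' : w ∉ icc a' b') : (icc a' b').card < (icc a b).card :=
  Finset.card_lt_card ((Finset.ssubset_iff_of_subset hsub).2 ⟨w, hw, hw'⟩)

end Defs


section Main

open Finset OrderDual SandsAux

universe u

set_option maxHeartbeats 1000000 in
theorem sands_main (n : ℕ) :
    (∀ (α : Type u) [DistribLattice α] [Fintype α] [DecidableEq α] (a b : α) (w : WithTop α),
      (icc a b).card ≤ n → Even (ds a b w).card → Matchable (ds a b w)) ∧
    (∀ (α : Type u) [DistribLattice α] [Fintype α] [DecidableEq α] (a b : α) (w : WithTop α),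
      (icc a b).card ≤ n → Odd (ds a b w).card → ∀ y' ∈ ds a b w,
        ∃ y ∈ ds a b w, y' ≤ y ∧ Matchable ((ds a b w).erase y)) := by
  induction n using Nat.strong_induction_on with
  | _ n IH =>
  have IHC : ∀ m, m < n → ∀ (α : Type u) [DistribLattice α] [Fintype α] [DecidableEq α]
      (a b : α) (w : WithTop α), (icc a b).card ≤ m → Even (ds a b w).card →
      Matchable (ds a b w) := fun m hm => (IH m hm).1
  have IHH : ∀ m, m < n → ∀ (α : Type u) [DistribLattice α] [Fintype α] [DecidableEq α]
      (a b : α) (w : WithTop α), (icc a b).card ≤ m → Odd (ds a b w).card →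
      ∀ y' ∈ ds a b w, ∃ y ∈ ds a b w, y' ≤ y ∧ Matchable ((ds a b w).erase y) :=
    fun m hm => (IH m hm).2
  -- Bottom-removal from an odd interval, via duality.
  have E0 : ∀ (α : Type u) [DistribLattice α] [Fintype α] [DecidableEq α] (a m : α),
      a ≤ m → (icc a m).card < n → Odd (icc a m).card → Matchable ((icc a m).erase a) := by
    intro α _ _ _ a m ham hlt hodd
    have hamem : a ∈ icc a m := mem_icc.2 ⟨le_rfl, ham⟩
    have hcard2 : ((ds (toDual m) (toDual a) ((toDual a : αᵒᵈ) : WithTop αᵒᵈ)) :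
        Finset αᵒᵈ).card = ((icc a m).erase a).card := by
      rw [← ds_dual_eq a m, Finset.card_image_of_injective _ ofDual.injective]
    have heven : Even ((ds (toDual m) (toDual a) ((toDual a : αᵒᵈ) : WithTop αᵒᵈ)) :
        Finset αᵒᵈ).card := by
      rw [hcard2, Finset.card_erase_of_mem hamem]
      exact Nat.Odd.sub_odd hodd odd_one
    have hM := IHC _ hlt αᵒᵈ (toDual m) (toDual a) ((toDual a : αᵒᵈ) : WithTop αᵒᵈ)
      (le_of_eq (icc_dual_card a m)) heven
    have := matchable_dual hM
    rw [ds_dual_eq a m] at this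
    exact this
  have Cpart : ∀ (α : Type u) [DistribLattice α] [Fintype α] [DecidableEq α] (a b : α)
      (w : WithTop α), (icc a b).card ≤ n → Even (ds a b w).card → Matchable (ds a b w) := by
    intro α _ _ _ a b w hn heven
    rcases Finset.eq_empty_or_nonempty (ds a b w) with hD | hD
    · exact matchable_congr hD.symm matchable_empty
    obtain ⟨x₀, hx₀⟩ := hD
    rw [mem_ds] at hx₀
    have hab : a ≤ b := le_trans hx₀.1 hx₀.2.1
    by_cases hbD : b ∈ ds a b w
    · -- full interval case
      have hfull : ds a b w = icc a b := by
        ext x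
        rw [mem_ds, mem_icc]
        constructor
        · tauto
        · rintro ⟨h1, h2⟩
          exact ⟨h1, h2, fun hle => (mem_ds.1 hbD).2.2
            (le_trans hle (WithTop.coe_le_coe.2 h2))⟩
      rw [hfull] at heven ⊢
      have hne' : ∃ x, a ≤ x ∧ x ≤ b ∧ x ≠ b := by
        by_contra hcon
        push_neg at hcon
        have hsing : icc a b = {b} := by
          ext x; rw [mem_icc]; simp only [Finset.mem_singleton]
          constructor
          · rintro ⟨h1, h2⟩; exact hcon x h1 h2
          · rintro rfl; exact ⟨hab, le_rfl⟩
        rw [hsing] at heven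
        simp at heven
      obtain ⟨c, u₀, hac, hclt, hau₀, hu₀b, hu₀c, hcov⟩ := coatom_struct hab hne'
      have hsub1 : icc a c ⊆ icc a b := by
        intro x hx; rw [mem_icc] at hx ⊢; exact ⟨hx.1, le_trans hx.2 hclt.le⟩
      have hsub2 : icc u₀ b ⊆ icc a b := by
        intro x hx; rw [mem_icc] at hx ⊢; exact ⟨le_trans hau₀ hx.1, hx.2⟩
      have hdisj : Disjoint (icc a c) (icc u₀ b) := by
        rw [Finset.disjoint_left]; intro x hx hx'
        rw [mem_icc] at hx hx'
        exact hu₀c (le_trans hx'.1 hx.2)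
      have hunion : icc a b = icc a c ∪ icc u₀ b := by
        ext x
        simp only [Finset.mem_union, mem_icc]
        constructor
        · rintro ⟨h1, h2⟩
          rcases hcov x h1 h2 with h | h
          · exact Or.inl ⟨h1, h⟩
          · exact Or.inr ⟨h, h2⟩
        · rintro (⟨h1, h2⟩ | ⟨h1, h2⟩)
          · exact ⟨h1, le_trans h2 hclt.le⟩
          · exact ⟨le_trans hau₀ h1, h2⟩
      have hlt1 : (icc a c).card < (icc a b).card :=
        icc_card_lt hsub1 (mem_icc.2 ⟨hab, le_rfl⟩)
          (fun h => hclt.not_ge (mem_icc.1 h).2)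
      have hlt2 : (icc u₀ b).card < (icc a b).card :=
        icc_card_lt hsub2 (mem_icc.2 ⟨hac, hclt.le⟩)
          (fun h => hu₀c (mem_icc.1 h).1)
      have hcards : (icc a b).card = (icc a c).card + (icc u₀ b).card := by
        rw [hunion]; exact Finset.card_union_of_disjoint hdisj
      rcases Nat.even_or_odd (icc a c).card with hpe | hpo
      · have hqe : Even (icc u₀ b).card := by
          rw [Nat.even_iff] at heven hpe ⊢; omega
        have M1 := IHC _ (lt_of_lt_of_le hlt1 hn) α a c ⊤ le_rfl
          (by rw [ds_top]; exact hpe)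
        have M2 := IHC _ (lt_of_lt_of_le hlt2 hn) α u₀ b ⊤ le_rfl
          (by rw [ds_top]; exact hqe)
        rw [ds_top] at M1 M2
        exact matchable_congr hunion.symm (matchable_union hdisj M1 M2)
      · have hqo : Odd (icc u₀ b).card := by
          rw [Nat.even_iff] at heven; rw [Nat.odd_iff] at hpo ⊢; omega
        have hcmem : c ∈ icc a c := mem_icc.2 ⟨hac, le_rfl⟩
        have hbmem : b ∈ icc u₀ b := mem_icc.2 ⟨hu₀b, le_rfl⟩
        have M1 := IHC _ (lt_of_lt_of_le hlt1 hn) α a c (↑c) le_rfl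
          (by rw [ds_coe_top, Finset.card_erase_of_mem hcmem]
              exact Nat.Odd.sub_odd hpo odd_one)
        have M2 := IHC _ (lt_of_lt_of_le hlt2 hn) α u₀ b (↑b) le_rfl
          (by rw [ds_coe_top, Finset.card_erase_of_mem hbmem]
              exact Nat.Odd.sub_odd hqo odd_one)
        rw [ds_coe_top] at M1 M2
        have M3 : Matchable ({c, b} : Finset α) := matchable_pair hclt
        have hd1 : Disjoint ((icc a c).erase c) ((icc u₀ b).erase b) :=
          hdisj.mono (Finset.erase_subset _ _) (Finset.erase_subset _ _)
        have hd2 : Disjoint (((icc a c).erase c) ∪ ((icc u₀ b).erase b))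
            ({c, b} : Finset α) := by
          rw [Finset.disjoint_right]
          intro x hx
          simp only [Finset.mem_insert, Finset.mem_singleton] at hx
          rcases hx with rfl | rfl
          · simp only [Finset.mem_union, Finset.mem_erase]
            push_neg
            constructor
            · intro h; exact absurd rfl h
            · intro _ h; exact absurd (mem_icc.1 h).1 hu₀c
          · simp only [Finset.mem_union, Finset.mem_erase]
            push_neg
            constructor
            · intro _ h; exact absurd (mem_icc.1 h).2 hclt.not_ge
            · intro h; exact absurd rfl h
        have hassemble : icc a b =
            (((icc a c).erase c) ∪ ((icc u₀ b).erase b)) ∪ ({c, b} : Finset α) := by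
          ext x
          simp only [Finset.mem_union, Finset.mem_erase, Finset.mem_insert,
            Finset.mem_singleton, mem_icc]
          constructor
          · rintro ⟨h1, h2⟩
            rcases hcov x h1 h2 with h | h
            · by_cases hxc : x = c
              · exact Or.inr (Or.inl hxc)
              · exact Or.inl (Or.inl ⟨hxc, h1, h⟩)
            · by_cases hxb : x = b
              · exact Or.inr (Or.inr hxb)
              · exact Or.inl (Or.inr ⟨hxb, h, h2⟩)
          · rintro ((⟨_, h1, h2⟩ | ⟨_, h1, h2⟩) | (rfl | rfl))
            · exact ⟨h1, le_trans h2 hclt.le⟩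
            · exact ⟨le_trans hau₀ h1, h2⟩
            · exact ⟨hac, hclt.le⟩
            · exact ⟨hab, le_rfl⟩
        exact matchable_congr hassemble.symm
          (matchable_union hd2 (matchable_union hd1 M1 M2) M3)
    · -- b ∉ D : normalize w to an element u₁ of (a, b]
      have hwb : w ≤ ↑b := by
        by_contra h
        exact hbD (mem_ds.2 ⟨hab, le_rfl, h⟩)
      obtain ⟨uL, rfl⟩ : ∃ uL : α, w = ↑uL := by
        cases w with
        | top => exact absurd hwb (by simp)
        | coe v => exact ⟨v, rfl⟩
      have huLb : uL ≤ b := WithTop.coe_le_coe.1 hwb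
      have hDeq : ds a b (↑uL) = ds a b (↑(uL ⊔ a)) := by
        ext x
        simp only [mem_ds, WithTop.coe_le_coe]
        constructor
        · rintro ⟨h1, h2, h3⟩
          exact ⟨h1, h2, fun h => h3 (le_trans le_sup_left h)⟩
        · rintro ⟨h1, h2, h3⟩
          exact ⟨h1, h2, fun h => h3 (sup_le h h1)⟩
      set u₁ := uL ⊔ a with hu₁def
      have hu₁b : u₁ ≤ b := sup_le huLb hab
      have hau₁ : a < u₁ := by
        rcases lt_or_eq_of_le (le_sup_right : a ≤ u₁) with h | h
        · exact h
        · exfalso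
          exact hx₀.2.2 (WithTop.coe_le_coe.2 (le_trans (le_sup_left.trans h.ge) hx₀.1))
      rw [hDeq] at heven ⊢
      obtain ⟨s, m, has, hsu₁, ham, hmb, hsm, hmI⟩ := atom_struct hau₁ hu₁b
      obtain ⟨hsplit, hdisj⟩ := ds_split has hsu₁ hmb hsm hmI
      have hcards : (ds a b (↑u₁)).card = (icc a m).card + (ds s b (↑u₁)).card := by
        rw [hsplit]; exact Finset.card_union_of_disjoint hdisj
      have hsub1 : icc a m ⊆ icc a b := by
        intro x hx; rw [mem_icc] at hx ⊢; exact ⟨hx.1, le_trans hx.2 hmb⟩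
      have hmlt : (icc a m).card < (icc a b).card :=
        icc_card_lt hsub1 (mem_icc.2 ⟨hab, le_rfl⟩)
          (fun h => hsm (le_trans (hsu₁.trans hu₁b) (mem_icc.1 h).2))
      have hslt : (icc s b).card < (icc a b).card := by
        refine icc_card_lt ?_ (mem_icc.2 ⟨le_rfl, hab⟩)
          (fun h => has.not_ge (mem_icc.1 h).1)
        intro x hx; rw [mem_icc] at hx ⊢; exact ⟨le_trans has.le hx.1, hx.2⟩
      have hicc_s_sub : ds s b (↑u₁) ⊆ icc s b := by
        intro x hx; rw [mem_ds] at hx; rw [mem_icc]; exact ⟨hx.1, hx.2.1⟩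
      rcases Nat.even_or_odd (icc a m).card with hpe | hpo
      · -- both even
        have hqe : Even (ds s b (↑u₁)).card := by
          rw [Nat.even_iff] at heven hpe ⊢; omega
        have M1 := IHC _ (lt_of_lt_of_le hmlt hn) α a m ⊤ le_rfl (by rw [ds_top]; exact hpe)
        rw [ds_top] at M1
        have M2 := IHC _ (lt_of_lt_of_le hslt hn) α s b (↑u₁) le_rfl hqe
        exact matchable_congr hsplit.symm (matchable_union hdisj M1 M2)
      · -- both odd: crossing pair (a, ŷ)
        have hqo : Odd (ds s b (↑u₁)).card := by
          rw [Nat.even_iff] at heven; rw [Nat.odd_iff] at hpo ⊢; omega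
        have hsmem : s ∈ ds s b (↑u₁) := by
          rw [mem_ds]
          refine ⟨le_rfl, hsu₁.trans hu₁b, ?_⟩
          rw [WithTop.coe_le_coe]
          intro h
          have : u₁ = s := le_antisymm h hsu₁
          have hempty : ds s b (↑u₁) = ∅ := by
            ext x
            simp only [mem_ds, Finset.notMem_empty, iff_false, not_and, WithTop.coe_le_coe]
            intro h1 h2 h3
            exact h3 (this ▸ h1)
          rw [hempty] at hqo
          simp [Nat.odd_iff] at hqo
        obtain ⟨y, hy, hsy, My⟩ := IHH _ (lt_of_lt_of_le hslt hn) α s b (↑u₁) le_rfl hqo s hsmem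
        have M1 : Matchable ((icc a m).erase a) :=
          E0 α a m ham (lt_of_lt_of_le hmlt hn) hpo
        have hymem := mem_ds.1 hy
        have hay : a < y := lt_of_lt_of_le has hymem.1
        have M2 : Matchable ({a, y} : Finset α) := matchable_pair hay
        have hynotI : y ∉ icc a m := by
          intro h
          exact hsm (le_trans hymem.1 (mem_icc.1 h).2)
        have hd1 : Disjoint ((icc a m).erase a) ({a, y} : Finset α) := by
          rw [Finset.disjoint_right]
          intro x hx
          simp only [Finset.mem_insert, Finset.mem_singleton] at hx
          rcases hx with rfl | rfl
          · exact Finset.notMem_erase _ _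
          · intro h; exact hynotI (Finset.mem_of_mem_erase h)
        have hd2 : Disjoint (((icc a m).erase a) ∪ ({a, y} : Finset α))
            ((ds s b (↑u₁)).erase y) := by
          rw [Finset.disjoint_left]
          intro x hx hx'
          have hx'' := Finset.mem_of_mem_erase hx'
          rcases Finset.mem_union.1 hx with h | h
          · exact (Finset.disjoint_left.1 hdisj) (Finset.mem_of_mem_erase h) hx''
          · simp only [Finset.mem_insert, Finset.mem_singleton] at h
            rcases h with rfl | rfl
            · exact has.not_ge (mem_ds.1 hx'').1
            · exact (Finset.ne_of_mem_erase hx') rfl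
        have hassemble : ds a b (↑u₁) =
            (((icc a m).erase a) ∪ ({a, y} : Finset α)) ∪ ((ds s b (↑u₁)).erase y) := by
          rw [hsplit]
          ext x
          simp only [Finset.mem_union, Finset.mem_erase, Finset.mem_insert,
            Finset.mem_singleton]
          constructor
          · rintro (h | h)
            · by_cases hxa : x = a
              · exact Or.inl (Or.inr (Or.inl hxa))
              · exact Or.inl (Or.inl ⟨hxa, h⟩)
            · by_cases hxy : x = y
              · exact Or.inl (Or.inr (Or.inr hxy))
              · exact Or.inr ⟨hxy, h⟩
          · rintro ((⟨_, h⟩ | (rfl | rfl)) | ⟨_, h⟩)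
            · exact Or.inl h
            · exact Or.inl (mem_icc.2 ⟨le_rfl, ham⟩)
            · exact Or.inr hy
            · exact Or.inr h
        exact matchable_congr hassemble.symm
          (matchable_union hd2 (matchable_union hd1 M1 M2) My)
  have Hpart : ∀ (α : Type u) [DistribLattice α] [Fintype α] [DecidableEq α] (a b : α)
      (w : WithTop α), (icc a b).card ≤ n → Odd (ds a b w).card → ∀ y' ∈ ds a b w,
      ∃ y ∈ ds a b w, y' ≤ y ∧ Matchable ((ds a b w).erase y) := by
    intro α _ _ _ a b w hn hodd y' hy'mem
    have erase_comm' : ∀ (S : Finset α) (p q : α), (S.erase p).erase q = (S.erase q).erase p := by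
      intro S p q; ext x
      simp only [Finset.mem_erase]; tauto
    have hy' := mem_ds.1 hy'mem
    have hab : a ≤ b := le_trans hy'.1 hy'.2.1
    by_cases hbD : b ∈ ds a b w
    · -- take y := b
      refine ⟨b, hbD, hy'.2.1, ?_⟩
      have hfull : ds a b w = icc a b := by
        ext x
        rw [mem_ds, mem_icc]
        constructor
        · tauto
        · rintro ⟨h1, h2⟩
          exact ⟨h1, h2, fun hle => (mem_ds.1 hbD).2.2
            (le_trans hle (WithTop.coe_le_coe.2 h2))⟩
      have herase : (ds a b w).erase b = ds a b (↑b) := by rw [hfull, ← ds_coe_top]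
      rw [herase]
      refine Cpart α a b (↑b) hn ?_
      rw [ds_coe_top, Finset.card_erase_of_mem (mem_icc.2 ⟨hab, le_rfl⟩), ← hfull]
      exact Nat.Odd.sub_odd hodd odd_one
    · -- normalize
      have hwb : w ≤ ↑b := by
        by_contra h
        exact hbD (mem_ds.2 ⟨hab, le_rfl, h⟩)
      obtain ⟨uL, rfl⟩ : ∃ uL : α, w = ↑uL := by
        cases w with
        | top => exact absurd hwb (by simp)
        | coe v => exact ⟨v, rfl⟩
      have huLb : uL ≤ b := WithTop.coe_le_coe.1 hwb
      have hDeq : ds a b (↑uL) = ds a b (↑(uL ⊔ a)) := by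
        ext x
        simp only [mem_ds, WithTop.coe_le_coe]
        constructor
        · rintro ⟨h1, h2, h3⟩
          exact ⟨h1, h2, fun h => h3 (le_trans le_sup_left h)⟩
        · rintro ⟨h1, h2, h3⟩
          exact ⟨h1, h2, fun h => h3 (sup_le h h1)⟩
      set u₁ := uL ⊔ a with hu₁def
      have hu₁b : u₁ ≤ b := sup_le huLb hab
      have hau₁ : a < u₁ := by
        rcases lt_or_eq_of_le (le_sup_right : a ≤ u₁) with h | h
        · exact h
        · exfalso
          exact hy'.2.2 (WithTop.coe_le_coe.2 (le_trans (le_sup_left.trans h.ge) hy'.1))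
      rw [hDeq] at hodd hy'mem ⊢
      have hy'' := mem_ds.1 hy'mem
      have hu₁y' : ¬ u₁ ≤ y' := by
        have := hy''.2.2; rwa [WithTop.coe_le_coe] at this
      by_cases hmeet : a < u₁ ⊓ y'
      · -- there is an atom t ≤ u₁ with t ≤ y'
        obtain ⟨t, mt, hat, htm', hamt, hmtb, htmt, hmtI⟩ :=
          atom_struct hmeet (le_trans inf_le_left hu₁b)
        have htu₁ : t ≤ u₁ := le_trans htm' inf_le_left
        have hty' : t ≤ y' := le_trans htm' inf_le_right
        obtain ⟨hsplit, hdisj⟩ := ds_split hat htu₁ hmtb htmt hmtI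
        have hcards : (ds a b (↑u₁)).card = (icc a mt).card + (ds t b (↑u₁)).card := by
          rw [hsplit]; exact Finset.card_union_of_disjoint hdisj
        have hsub1 : icc a mt ⊆ icc a b := by
          intro x hx; rw [mem_icc] at hx ⊢; exact ⟨hx.1, le_trans hx.2 hmtb⟩
        have hmtlt : (icc a mt).card < (icc a b).card :=
          icc_card_lt hsub1 (mem_icc.2 ⟨hab, le_rfl⟩)
            (fun h => htmt (le_trans (htu₁.trans hu₁b) (mem_icc.1 h).2))
        have htlt : (icc t b).card < (icc a b).card := by
          refine icc_card_lt ?_ (mem_icc.2 ⟨le_rfl, hab⟩)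
            (fun h => hat.not_ge (mem_icc.1 h).1)
          intro x hx; rw [mem_icc] at hx ⊢; exact ⟨le_trans hat.le hx.1, hx.2⟩
        have hy'upper : y' ∈ ds t b (↑u₁) := mem_ds.2 ⟨hty', hy''.2.1, hy''.2.2⟩
        rcases Nat.even_or_odd (ds t b (↑u₁)).card with hqe | hqo
        · -- q even : pair-extraction
          have hpo : Odd (icc a mt).card := by
            rw [Nat.odd_iff] at hodd ⊢; rw [Nat.even_iff] at hqe; omega
          obtain ⟨CC, hCC⟩ := IHC _ (lt_of_lt_of_le htlt hn) α t b (↑u₁) le_rfl hqe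
          obtain ⟨P, hPC, hy'P⟩ := chains_exists_pair hCC hy'upper
          obtain ⟨hPlt, hP1, hP2⟩ := hCC.1 P hPC
          have hCe := chains_erase hCC hPC
          -- extract z
          obtain ⟨z, hzS, hzy', hseteq⟩ :
              ∃ z, z ∈ ds t b (↑u₁) ∧ z ≠ y' ∧
                (((ds t b (↑u₁)).erase P.1).erase P.2) =
                  (((ds t b (↑u₁)).erase y').erase z) := by
            rcases hy'P with h | h
            · exact ⟨P.2, hP2, by rw [h]; exact hPlt.ne', by rw [h]⟩
            · exact ⟨P.1, hP1, by rw [h]; exact hPlt.ne, by rw [h, erase_comm']⟩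
          have M3 : Matchable (((ds t b (↑u₁)).erase y').erase z) := ⟨_, hseteq ▸ hCe⟩
          have M1 : Matchable ((icc a mt).erase a) :=
            E0 α a mt hamt (lt_of_lt_of_le hmtlt hn) hpo
          have haz : a < z := lt_of_lt_of_le hat (mem_ds.1 hzS).1
          have M2 : Matchable ({a, z} : Finset α) := matchable_pair haz
          refine ⟨y', hy'mem, le_rfl, ?_⟩
          have hd1 : Disjoint ((icc a mt).erase a) ({a, z} : Finset α) := by
            rw [Finset.disjoint_right]
            intro x hx
            simp only [Finset.mem_insert, Finset.mem_singleton] at hx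
            rcases hx with rfl | rfl
            · exact Finset.notMem_erase _ _
            · intro h
              exact (Finset.disjoint_left.1 hdisj) (Finset.mem_of_mem_erase h) hzS
          have hd2 : Disjoint (((icc a mt).erase a) ∪ ({a, z} : Finset α))
              (((ds t b (↑u₁)).erase y').erase z) := by
            rw [Finset.disjoint_left]
            intro x hx hx'
            have hx'' := Finset.mem_of_mem_erase (Finset.mem_of_mem_erase hx')
            rcases Finset.mem_union.1 hx with h | h
            · exact (Finset.disjoint_left.1 hdisj) (Finset.mem_of_mem_erase h) hx''
            · simp only [Finset.mem_insert, Finset.mem_singleton] at h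
              rcases h with rfl | rfl
              · exact hat.not_ge (mem_ds.1 hx'').1
              · exact (Finset.ne_of_mem_erase hx') rfl
          have hy'notI : y' ∉ icc a mt := by
            intro h
            exact (Finset.disjoint_left.1 hdisj) h hy'upper
          have hassemble : (ds a b (↑u₁)).erase y' =
              (((icc a mt).erase a) ∪ ({a, z} : Finset α)) ∪
                (((ds t b (↑u₁)).erase y').erase z) := by
            ext x
            simp only [Finset.mem_erase, Finset.mem_union, Finset.mem_insert,
              Finset.mem_singleton]
            constructor
            · rintro ⟨hxy', hx⟩
              rw [hsplit, Finset.mem_union] at hx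
              rcases hx with h | h
              · by_cases hxa : x = a
                · exact Or.inl (Or.inr (Or.inl hxa))
                · exact Or.inl (Or.inl ⟨hxa, h⟩)
              · by_cases hxz : x = z
                · exact Or.inl (Or.inr (Or.inr hxz))
                · exact Or.inr ⟨hxz, hxy', h⟩
            · rintro ((⟨hxa, hxmem⟩ | (rfl | rfl)) | ⟨hxz, hxy', hxmem⟩)
              · refine ⟨fun he => hy'notI (he ▸ hxmem), ?_⟩
                rw [hsplit, Finset.mem_union]; exact Or.inl hxmem
              · refine ⟨fun he => hy'notI (he ▸ mem_icc.2 ⟨le_rfl, hamt⟩), ?_⟩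
                rw [hsplit, Finset.mem_union]
                exact Or.inl (mem_icc.2 ⟨le_rfl, hamt⟩)
              · refine ⟨hzy', ?_⟩
                rw [hsplit, Finset.mem_union]; exact Or.inr hzS
              · refine ⟨hxy', ?_⟩
                rw [hsplit, Finset.mem_union]; exact Or.inr hxmem
          exact matchable_congr hassemble.symm
            (matchable_union hd2 (matchable_union hd1 M1 M2) M3)
        · -- q odd : recurse in upper part
          have hpe : Even (icc a mt).card := by
            rw [Nat.odd_iff] at hodd hqo; rw [Nat.even_iff]; omega
          obtain ⟨y, hy, hy'y, My⟩ :=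
            IHH _ (lt_of_lt_of_le htlt hn) α t b (↑u₁) le_rfl hqo y' hy'upper
          have M1 := IHC _ (lt_of_lt_of_le hmtlt hn) α a mt ⊤ le_rfl
            (by rw [ds_top]; exact hpe)
          rw [ds_top] at M1
          have hyD : y ∈ ds a b (↑u₁) := by
            rw [hsplit, Finset.mem_union]; exact Or.inr hy
          refine ⟨y, hyD, hy'y, ?_⟩
          have hynotI : y ∉ icc a mt := fun h => (Finset.disjoint_left.1 hdisj) h hy
          have hassemble : (ds a b (↑u₁)).erase y =
              icc a mt ∪ ((ds t b (↑u₁)).erase y) := by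
            ext x
            simp only [Finset.mem_erase, Finset.mem_union]
            constructor
            · rintro ⟨hxy, hx⟩
              rw [hsplit, Finset.mem_union] at hx
              rcases hx with h | h
              · exact Or.inl h
              · exact Or.inr ⟨hxy, h⟩
            · rintro (h | ⟨hxy, hxmem⟩)
              · refine ⟨fun he => hynotI (he ▸ h), ?_⟩
                rw [hsplit, Finset.mem_union]; exact Or.inl h
              · refine ⟨hxy, ?_⟩
                rw [hsplit, Finset.mem_union]
                exact Or.inr hxmem
          refine matchable_congr hassemble.symm
            (matchable_union ?_ M1 My)
          exact hdisj.mono_right (Finset.erase_subset _ _)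
      · -- u₁ ⊓ y' = a
        have hmeq : u₁ ⊓ y' = a := ((le_inf hau₁.le hy''.1).lt_or_eq.resolve_left hmeet).symm
        obtain ⟨s, ms, has, hsu₁, hams, hmsb, hsms, hmsI⟩ := atom_struct hau₁ hu₁b
        have hsy' : ¬ s ≤ y' := fun h =>
          has.ne' (le_antisymm (hmeq ▸ le_inf hsu₁ h) has.le)
        have hy'ms : y' ≤ ms := hmsI y' hy''.1 hy''.2.1 hsy'
        have hmslt : (icc a ms).card < (icc a b).card := by
          refine icc_card_lt ?_ (mem_icc.2 ⟨hab, le_rfl⟩)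
            (fun h => hsms (le_trans (hsu₁.trans hu₁b) (mem_icc.1 h).2))
          intro x hx; rw [mem_icc] at hx ⊢; exact ⟨hx.1, le_trans hx.2 hmsb⟩
        by_cases hu₁s : u₁ = s
        · -- u₁ is an atom : D = [a, ms]
          have hDfull : ds a b (↑u₁) = icc a ms := by
            ext x
            rw [mem_ds, mem_icc, WithTop.coe_le_coe]
            constructor
            · rintro ⟨h1, h2, h3⟩
              exact ⟨h1, hmsI x h1 h2 (fun hsx => h3 (hu₁s ▸ hsx))⟩
            · rintro ⟨h1, h2⟩
              exact ⟨h1, le_trans h2 hmsb,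
                fun h => hsms (le_trans (hu₁s ▸ h) h2)⟩
          refine ⟨ms, ?_, hy'ms, ?_⟩
          · rw [hDfull]; exact mem_icc.2 ⟨hams, le_rfl⟩
          · rw [hDfull, ← ds_coe_top]
            refine IHC _ (lt_of_lt_of_le hmslt hn) α a ms (↑ms) le_rfl ?_
            rw [ds_coe_top, Finset.card_erase_of_mem (mem_icc.2 ⟨hams, le_rfl⟩)]
            rw [hDfull] at hodd
            exact Nat.Odd.sub_odd hodd odd_one
        · -- s < u₁
          have hkey : ¬ u₁ ≤ y' ⊔ s := by
            intro h
            apply hu₁s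
            have h1 : u₁ = (u₁ ⊓ y') ⊔ (u₁ ⊓ s) := by
              rw [← inf_sup_left]; exact (inf_eq_left.2 h).symm
            rw [hmeq, inf_eq_right.2 hsu₁] at h1
            rw [h1]; exact sup_eq_right.2 has.le
          obtain ⟨hsplit, hdisj⟩ := ds_split has hsu₁ hmsb hsms hmsI
          have hcards : (ds a b (↑u₁)).card = (icc a ms).card + (ds s b (↑u₁)).card := by
            rw [hsplit]; exact Finset.card_union_of_disjoint hdisj
          have hslt : (icc s b).card < (icc a b).card := by
            refine icc_card_lt ?_ (mem_icc.2 ⟨le_rfl, hab⟩)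
              (fun h => has.not_ge (mem_icc.1 h).1)
            intro x hx; rw [mem_icc] at hx ⊢; exact ⟨le_trans has.le hx.1, hx.2⟩
          rcases Nat.even_or_odd (icc a ms).card with hpe | hpo
          · -- p even, q odd : recurse in the upper part from y' ⊔ s
            have hqo : Odd (ds s b (↑u₁)).card := by
              rw [Nat.odd_iff] at hodd ⊢; rw [Nat.even_iff] at hpe; omega
            have hysmem : y' ⊔ s ∈ ds s b (↑u₁) := by
              rw [mem_ds, WithTop.coe_le_coe]
              exact ⟨le_sup_right, sup_le hy''.2.1 (hsu₁.trans hu₁b), hkey⟩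
            obtain ⟨y, hy, hyy, My⟩ :=
              IHH _ (lt_of_lt_of_le hslt hn) α s b (↑u₁) le_rfl hqo (y' ⊔ s) hysmem
            have M1 := IHC _ (lt_of_lt_of_le hmslt hn) α a ms ⊤ le_rfl
              (by rw [ds_top]; exact hpe)
            rw [ds_top] at M1
            have hyD : y ∈ ds a b (↑u₁) := by
              rw [hsplit, Finset.mem_union]; exact Or.inr hy
            refine ⟨y, hyD, le_trans le_sup_left hyy, ?_⟩
            have hynotI : y ∉ icc a ms := fun h => (Finset.disjoint_left.1 hdisj) h hy
            have hassemble : (ds a b (↑u₁)).erase y =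
                icc a ms ∪ ((ds s b (↑u₁)).erase y) := by
              ext x
              simp only [Finset.mem_erase, Finset.mem_union]
              constructor
              · rintro ⟨hxy, hx⟩
                rw [hsplit, Finset.mem_union] at hx
                rcases hx with h | h
                · exact Or.inl h
                · exact Or.inr ⟨hxy, h⟩
              · rintro (h | ⟨hxy, hxmem⟩)
                · refine ⟨fun he => hynotI (he ▸ h), ?_⟩
                  rw [hsplit, Finset.mem_union]; exact Or.inl h
                · refine ⟨hxy, ?_⟩
                  rw [hsplit, Finset.mem_union]
                  exact Or.inr hxmem
            refine matchable_congr hassemble.symm (matchable_union ?_ M1 My)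
            exact hdisj.mono_right (Finset.erase_subset _ _)
          · -- p odd, q even : take y := ms
            have hqe : Even (ds s b (↑u₁)).card := by
              rw [Nat.odd_iff] at hodd hpo; rw [Nat.even_iff]; omega
            have hmsD : ms ∈ ds a b (↑u₁) := by
              rw [mem_ds, WithTop.coe_le_coe]
              exact ⟨hams, hmsb, fun h => hsms (le_trans hsu₁ h)⟩
            refine ⟨ms, hmsD, hy'ms, ?_⟩
            have M1 := IHC _ (lt_of_lt_of_le hmslt hn) α a ms (↑ms) le_rfl
              (by rw [ds_coe_top, Finset.card_erase_of_mem (mem_icc.2 ⟨hams, le_rfl⟩)]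
                  exact Nat.Odd.sub_odd hpo odd_one)
            rw [ds_coe_top] at M1
            have M2 := IHC _ (lt_of_lt_of_le hslt hn) α s b (↑u₁) le_rfl hqe
            have hmsnotS : ms ∉ ds s b (↑u₁) := fun h => hsms (mem_ds.1 h).1
            have hassemble : (ds a b (↑u₁)).erase ms =
                ((icc a ms).erase ms) ∪ ds s b (↑u₁) := by
              ext x
              simp only [Finset.mem_erase, Finset.mem_union]
              constructor
              · rintro ⟨hxms, hx⟩
                rw [hsplit, Finset.mem_union] at hx
                rcases hx with h | h
                · exact Or.inl ⟨hxms, h⟩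
                · exact Or.inr h
              · rintro (⟨hxms, hxmem⟩ | h)
                · refine ⟨hxms, ?_⟩
                  rw [hsplit, Finset.mem_union]
                  exact Or.inl hxmem
                · refine ⟨fun he => hmsnotS (he ▸ h), ?_⟩
                  rw [hsplit, Finset.mem_union]; exact Or.inr h
            refine matchable_congr hassemble.symm (matchable_union ?_ M1 M2)
            exact hdisj.mono_left (Finset.erase_subset _ _)
  exact ⟨Cpart, Hpart⟩

end Main

end SandsAux

open SandsAux in
/-- If `L` is a finite distributive lattice with an odd number of elements and
greatest element `⊤`, then `L \ {⊤}` can be partitioned into two-element chains. -/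
theorem sands_matching_odd (L : Type*) [DistribLattice L] [Fintype L] [OrderTop L]
    (h : Odd (Fintype.card L)) :
    ∃ C : Finset (L × L), (∀ p ∈ C, p.1 < p.2 ∧ p.2 ≠ (⊤ : L)) ∧
      ∀ x : L, x ≠ ⊤ → ∃! p : L × L, p ∈ C ∧ (x = p.1 ∨ x = p.2) := by
  classical
  have hne : (Finset.univ : Finset L).Nonempty := ⟨⊤, Finset.mem_univ _⟩
  set a₀ := (Finset.univ : Finset L).inf' hne id with ha₀def
  have ha₀ : ∀ x : L, a₀ ≤ x := fun x => Finset.inf'_le id (Finset.mem_univ x)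
  have hds : ds a₀ (⊤ : L) ((⊤ : L) : WithTop L) = Finset.univ.erase ⊤ := by
    ext x
    simp only [mem_ds, Finset.mem_erase, Finset.mem_univ, and_true, WithTop.coe_le_coe]
    constructor
    · rintro ⟨-, -, h3⟩; exact fun he => h3 (he ▸ le_rfl)
    · intro hxt; exact ⟨ha₀ x, le_top, fun hle => hxt (le_antisymm le_top hle)⟩
  have heven : Even (ds a₀ (⊤ : L) ((⊤ : L) : WithTop L)).card := by
    rw [hds, Finset.card_erase_of_mem (Finset.mem_univ _), Finset.card_univ]
    exact Nat.Odd.sub_odd h odd_one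
  obtain ⟨C, hC1, hC2⟩ :=
    (SandsAux.sands_main ((icc a₀ (⊤ : L)).card)).1 L a₀ ⊤ _ le_rfl heven
  refine ⟨C, ?_, ?_⟩
  · intro p hp
    obtain ⟨hlt, h1, h2⟩ := hC1 p hp
    rw [hds] at h2
    exact ⟨hlt, Finset.ne_of_mem_erase h2⟩
  · intro x hx
    apply hC2
    rw [hds]
    exact Finset.mem_erase.2 ⟨hx, Finset.mem_univ x⟩
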